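/- Let (X, φ) be a size pair. For every pair u < v, the size function value ℓ_{(X,φ)}(u,v) equals the rank of the 0-th persistent Čech homology group with field coefficients, i.e., the rank of the image of the homomorphism ι_0^{u,v} : Ȟ_0(X_u) → Ȟ_0(X_v) induced by the inclusion X_u ↪ X_v. -/

import Mathlib

universe u v

/-- An abstract packaging of (degree-0) Čech homology with coefficients in a field `K`,
applied to the subspaces of a topological space `X`: absolute groups `Ȟ₀(S)`, relative
groups `Ȟ₀(T, S)`, inclusion-induced homomorphisms, together with the standard
properties of Čech homology on compact Hausdorff pairs with field coefficients
(rank `Ȟ₀` = number of connected components, functoriality, exactness of the final part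
of the homology sequence of a pair). -/
structure CechTheory (X : Type u) [TopologicalSpace X] (K : Type v) [Field K] where
  /-- the 0-th Čech homology group of a subspace -/
  H0 : Set X → Type v
  [h0Add : ∀ S : Set X, AddCommGroup (H0 S)]
  [h0Mod : ∀ S : Set X, Module K (H0 S)]
  /-- the relative 0-th Čech homology group `Ȟ₀(T, S)` -/
  H0rel : Set X → Set X → Type v
  [h0relAdd : ∀ T S : Set X, AddCommGroup (H0rel T S)]
  [h0relMod : ∀ T S : Set X, Module K (H0rel T S)]
  /-- the homomorphism induced by an inclusion of subspaces -/
  map : ∀ {S T : Set X}, S ⊆ T → (H0 S →ₗ[K] H0 T)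
  /-- the homomorphism induced by an inclusion of pairs -/
  maprel : ∀ {T S T' S' : Set X}, T ⊆ T' → S ⊆ S' → (H0rel T S →ₗ[K] H0rel T' S')
  /-- the natural map `Ȟ₀(T) → Ȟ₀(T, S)` -/
  quot : ∀ T S : Set X, H0 T →ₗ[K] H0rel T S
  map_comp : ∀ {S T U : Set X} (h₁ : S ⊆ T) (h₂ : T ⊆ U),
    (map h₂).comp (map h₁) = map (h₁.trans h₂)
  /-- the homology class of a point -/
  cls : ∀ S : Set X, S → H0 S
  map_cls : ∀ {S T : Set X} (h : S ⊆ T) (x : S), map h (cls S x) = cls T ⟨x.1, h x.2⟩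
  cls_eq_iff : ∀ S : Set X, IsCompact S → ∀ x y : S,
    (cls S x = cls S y ↔ connectedComponent x = connectedComponent y)
  cls_span : ∀ S : Set X, IsCompact S →
    Submodule.span K (Set.range (cls S)) = ⊤
  cls_indep : ∀ S : Set X, IsCompact S → ∀ f : ConnectedComponents ↥S → ↥S,
    (∀ c, ConnectedComponents.mk (f c) = c) →
    LinearIndependent K fun c => cls S (f c)
  quot_surjective : ∀ T S : Set X, S ⊆ T → Function.Surjective (quot T S)
  exact_pair : ∀ {S T : Set X} (h : S ⊆ T),
    LinearMap.range (map h) = LinearMap.ker (quot T S)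

attribute [instance] CechTheory.h0Add CechTheory.h0Mod CechTheory.h0relAdd
  CechTheory.h0relMod

/-- The size function of a size pair: `sizeFun φ u v` is the number of connected
components of the sublevel set `X_v = {φ ≤ v}` containing at least one point of
`X_u = {φ ≤ u}`. -/
noncomputable def sizeFun {X : Type u} [TopologicalSpace X] (φ : X → ℝ) (u v : ℝ) : ℕ :=
  Set.ncard {C : Set ↥{x : X | φ x ≤ v} |
    ∃ p : ↥{x : X | φ x ≤ v}, φ (p : X) ≤ u ∧ C = connectedComponent p}

/-- Corollary 3.8: for a size pair `(X, φ)` and `u < v`, the value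
`ℓ_{(X,φ)}(u,v)` of the size function equals the rank of the 0-th persistent Čech
homology group, i.e. the rank of the image of `ι₀^{u,v} : Ȟ₀(X_u) → Ȟ₀(X_v)`. -/
theorem sizeFun_eq_rank_persistent {X : Type u} [TopologicalSpace X] [CompactSpace X]
    [T2Space X] [LocallyConnectedSpace X] [Nonempty X] {K : Type v} [Field K]
    (C : CechTheory X K) {φ : X → ℝ} (hφ : Continuous φ) {u v : ℝ} (huv : u < v) :
    sizeFun φ u v = Module.finrank K
      (LinearMap.range (C.map (show {x : X | φ x ≤ u} ⊆ {x : X | φ x ≤ v} from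
        fun x hx => le_trans hx huv.le))) := by
  classical
  set S : Set X := {x : X | φ x ≤ u} with hSdef
  set T : Set X := {x : X | φ x ≤ v} with hTdef
  have hST : S ⊆ T := fun x hx => le_trans hx huv.le
  have hScomp : IsCompact S := (isClosed_le hφ continuous_const).isCompact
  have hTcomp : IsCompact T := (isClosed_le hφ continuous_const).isCompact
  have hsurj : Function.Surjective (ConnectedComponents.mk : ↥T → ConnectedComponents ↥T) :=
    ConnectedComponents.surjective_coe
  set f : ConnectedComponents ↥T → ↥T := Function.surjInv hsurj with hfdef
  have hf : ∀ c, ConnectedComponents.mk (f c) = c := fun c => Function.surjInv_eq hsurj c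
  set g : ConnectedComponents ↥T → C.H0 T := fun c => C.cls T (f c) with hgdef
  have li : LinearIndependent K g := C.cls_indep T hTcomp f hf
  have hginj : Function.Injective g := li.injective
  have hcls : ∀ p : ↥T, C.cls T p = g (ConnectedComponents.mk p) := fun p =>
    (C.cls_eq_iff T hTcomp p (f (ConnectedComponents.mk p))).2
      (ConnectedComponents.coe_eq_coe.mp (hf (ConnectedComponents.mk p))).symm
  set A : Set ↥T := {p : ↥T | φ (p : X) ≤ u} with hAdef
  set D : Set (ConnectedComponents ↥T) := ConnectedComponents.mk '' A with hDdef
  -- size function side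
  have hsize : sizeFun φ u v = D.ncard := by
    have hset : {C' : Set ↥T | ∃ p : ↥T, φ (p : X) ≤ u ∧ C' = connectedComponent p}
        = (fun c => connectedComponent (f c)) '' D := by
      ext C'
      constructor
      · rintro ⟨p, hp, rfl⟩
        exact ⟨ConnectedComponents.mk p, ⟨p, hp, rfl⟩,
          ConnectedComponents.coe_eq_coe.mp (hf (ConnectedComponents.mk p))⟩
      · rintro ⟨c, ⟨p, hp, rfl⟩, rfl⟩
        exact ⟨p, hp,
          ConnectedComponents.coe_eq_coe.mp (hf (ConnectedComponents.mk p))⟩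
    have hcinj : Function.Injective (fun c => connectedComponent (f c)) := by
      intro c c' hcc
      rw [← hf c, ← hf c', ConnectedComponents.coe_eq_coe]
      exact hcc
    rw [sizeFun, hset, Set.ncard_image_of_injective D hcinj]
  -- homology side
  have hrange : LinearMap.range (C.map hST) = Submodule.span K (g '' D) := by
    rw [LinearMap.range_eq_map, ← C.cls_span S hScomp, Submodule.map_span, ← Set.range_comp]
    congr 1
    ext z
    constructor
    · rintro ⟨x, rfl⟩
      refine ⟨ConnectedComponents.mk ⟨x.1, hST x.2⟩, ⟨⟨x.1, hST x.2⟩, x.2, rfl⟩, ?_⟩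
      simp only [Function.comp_apply, C.map_cls]
      exact (hcls _).symm
    · rintro ⟨c, ⟨p, hp, rfl⟩, rfl⟩
      refine ⟨⟨p.1, hp⟩, ?_⟩
      simp only [Function.comp_apply, C.map_cls]
      rw [show (⟨(⟨p.1, hp⟩ : ↥S).1, hST hp⟩ : ↥T) = p from rfl, hcls p]
  have hrank : Module.finrank K (LinearMap.range (C.map hST)) = D.ncard := by
    rw [hrange]
    have li' : LinearIndependent K ((↑) : (g '' D) → C.H0 T) :=
      LinearIndepOn.id_image (s := D) (li.comp Subtype.val Subtype.val_injective)
    rw [Module.finrank, rank_span_set li']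
    rw [show (Cardinal.mk ↥(g '' D)).toNat = Nat.card ↥(g '' D) from rfl,
      Nat.card_coe_set_eq, Set.ncard_image_of_injective D hginj]
  rw [hsize, ← hrank]
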